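/- Let A_0, ..., A_{n-1} be finite idempotent algebras of a common signature, and suppose B_i is a minimal absorbing subalgebra of A_i for each i. Let R ≤_sd A_0 × ... × A_{n-1} be a subdirect product and let R' = R ∩ (B_0 × ... × B_{n-1}). If R' ≠ ∅, then R' is (the universe of) a subdirect product of B_0 × ... × B_{n-1}; that is, for each i, the projection of R' onto the i-th coordinate equals B_i. -/

import Mathlib

/-- A (functional) signature: a type of operation symbols, each with an arity. -/
structure Signature where
  ops : Type
  arity : ops → ℕ

/-- Terms of a signature in `n` variables. -/
inductive UTerm (σ : Signature) : ℕ → Type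
  | var : ∀ {n}, Fin n → UTerm σ n
  | app : ∀ {n} (f : σ.ops), (Fin (σ.arity f) → UTerm σ n) → UTerm σ n

/-- An algebra of signature `σ` on carrier `A`. -/
structure UAlgebra (σ : Signature) (A : Type) where
  interp : ∀ f : σ.ops, (Fin (σ.arity f) → A) → A

namespace UAlgebra

variable {σ : Signature} {A : Type}

/-- The term operation induced by a term. -/
def eval (Alg : UAlgebra σ A) {n : ℕ} : UTerm σ n → (Fin n → A) → A
  | .var i, env => env i
  | .app f ts, env => Alg.interp f fun j => Alg.eval (ts j) env

/-- An algebra is idempotent if every basic operation satisfies `f(a,…,a) = a`. -/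
def Idempotent (Alg : UAlgebra σ A) : Prop :=
  ∀ (f : σ.ops) (a : A), Alg.interp f (fun _ => a) = a

/-- A congruence: an equivalence relation compatible with the basic operations. -/
def IsCong (Alg : UAlgebra σ A) (θ : A → A → Prop) : Prop :=
  (∀ a, θ a a) ∧ (∀ a b, θ a b → θ b a) ∧ (∀ a b c, θ a b → θ b c → θ a c) ∧
  ∀ (f : σ.ops) (x y : Fin (σ.arity f) → A),
    (∀ j, θ (x j) (y j)) → θ (Alg.interp f x) (Alg.interp f y)

/-- A subuniverse: a subset closed under the basic operations. -/
def IsSubuniv (Alg : UAlgebra σ A) (B : Set A) : Prop :=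
  ∀ (f : σ.ops) (x : Fin (σ.arity f) → A), (∀ j, x j ∈ B) → Alg.interp f x ∈ B

/-- A simple algebra: more than one element, and the only congruences are `0` and `1`. -/
def Simple (Alg : UAlgebra σ A) : Prop :=
  (∃ a b : A, a ≠ b) ∧
  ∀ θ : A → A → Prop, Alg.IsCong θ → (∀ a b, θ a b ↔ a = b) ∨ (∀ a b, θ a b)

/-- An abelian algebra: for every `(ℓ+m)`-ary term operation `t` and tuples
`a b : Aᶩ`, `u v : Aᵐ`, `t(a,u) = t(a,v) ↔ t(b,u) = t(b,v)`. -/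
def Abelian (Alg : UAlgebra σ A) : Prop :=
  ∀ (ℓ m : ℕ) (t : UTerm σ (ℓ + m)) (a b : Fin ℓ → A) (u v : Fin m → A),
    (Alg.eval t (Fin.append a u) = Alg.eval t (Fin.append a v) ↔
      Alg.eval t (Fin.append b u) = Alg.eval t (Fin.append b v))

/-- `B` is an absorbing subalgebra of `A` with respect to the `k`-ary term `t`:
`B` is a (nonempty) subuniverse, and applying `t` to arguments all of which lie
in `B` except possibly one (arbitrary in `A`) lands in `B`. -/
def AbsorbingWith (Alg : UAlgebra σ A) (B : Set A) {k : ℕ} (t : UTerm σ k) : Prop :=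
  B.Nonempty ∧ Alg.IsSubuniv B ∧
  ∀ (j : Fin k) (x : Fin k → A), (∀ i, i ≠ j → x i ∈ B) → Alg.eval t x ∈ B

/-- `B ◁ A` : `B` is absorbing with respect to some term. -/
def Absorbing (Alg : UAlgebra σ A) (B : Set A) : Prop :=
  ∃ (k : ℕ) (t : UTerm σ k), Alg.AbsorbingWith B t

/-- `B ◁◁ A` : `B` is minimal among absorbing subuniverses of `A`. -/
def MinAbsorbing (Alg : UAlgebra σ A) (B : Set A) : Prop :=
  Alg.Absorbing B ∧ ∀ C : Set A, Alg.Absorbing C → C ⊆ B → C = B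

/-- A congruence of the subalgebra with universe `R`. -/
def IsCongOn (Alg : UAlgebra σ A) (R : Set A) (θ : A → A → Prop) : Prop :=
  (∀ a ∈ R, θ a a) ∧ (∀ a b, θ a b → θ b a) ∧ (∀ a b c, θ a b → θ b c → θ a c) ∧
  (∀ a b, θ a b → a ∈ R ∧ b ∈ R) ∧
  ∀ (f : σ.ops) (x y : Fin (σ.arity f) → A),
    (∀ j, θ (x j) (y j)) → θ (Alg.interp f x) (Alg.interp f y)

/-- The join of `θ₁` and `θ₂` in the congruence lattice of the subalgebra `R`
is the top congruence `1_R`. -/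
def JoinIsTop (Alg : UAlgebra σ A) (R : Set A) (θ₁ θ₂ : A → A → Prop) : Prop :=
  ∀ θ : A → A → Prop, Alg.IsCongOn R θ →
    (∀ a b, θ₁ a b → θ a b) → (∀ a b, θ₂ a b → θ a b) →
    ∀ a ∈ R, ∀ b ∈ R, θ a b

end UAlgebra

/-- Interpreting a `Fin 2`-indexed choice of the variables `x`, `y`. -/
def pick {A : Type} (x y : A) : Fin 2 → A := fun b => if b = 0 then x else y

/-- `t` is a common Taylor term for the family `Alg`: it is idempotent in every
algebra of the family, and for each coordinate `i` there is an identity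
`t(u_0,…,u_{n-1}) ≈ t(v_0,…,v_{n-1})` (each `u_j, v_j ∈ {x,y}`, `u_i = x`,
`v_i = y`) holding in every algebra of the family. -/
def IsTaylorFamily {σ : Signature} {ι : Type} {A : ι → Type}
    (Alg : ∀ i, UAlgebra σ (A i)) {n : ℕ} (t : UTerm σ n) : Prop :=
  ∃ u v : Fin n → Fin n → Fin 2,
    (∀ i : Fin n, u i i = 0 ∧ v i i = 1) ∧
    ∀ k : ι,
      (∀ a : A k, (Alg k).eval t (fun _ => a) = a) ∧
      ∀ (i : Fin n) (x y : A k),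
        (Alg k).eval t (fun j => pick x y (u i j)) =
        (Alg k).eval t (fun j => pick x y (v i j))

/-- Taylor term of a single algebra. -/
def IsTaylorFor {σ : Signature} {A : Type} (Alg : UAlgebra σ A) {n : ℕ}
    (t : UTerm σ n) : Prop :=
  IsTaylorFamily (fun _ : PUnit => Alg) t

/-- The product algebra of a family of algebras of a common signature. -/
def prodAlgebra {σ : Signature} {ι : Type} {A : ι → Type}
    (Alg : ∀ i, UAlgebra σ (A i)) : UAlgebra σ (∀ i, A i) :=
  ⟨fun f x i => (Alg i).interp f (fun j => x j i)⟩

/-- `R ≤_sd ∏ A_i` : `R` is a (nonempty) subuniverse of the product whose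
coordinate projections are all surjective. -/
def IsSubdirect {σ : Signature} {ι : Type} {A : ι → Type}
    (Alg : ∀ i, UAlgebra σ (A i)) (R : Set (∀ i, A i)) : Prop :=
  R.Nonempty ∧ (prodAlgebra Alg).IsSubuniv R ∧
  ∀ (i : ι) (a : A i), ∃ r ∈ R, r i = a

/-- The kernel `η_s` of the projection of `R` onto the coordinates in `s`,
as a relation (congruence of the subalgebra `R`). -/
def projKer {ι : Type} {A : ι → Type} (R : Set (∀ i, A i)) (s : Set ι) :
    (∀ i, A i) → (∀ i, A i) → Prop :=
  fun x y => x ∈ R ∧ y ∈ R ∧ ∀ i ∈ s, x i = y i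

/-- The kernels of the `i`-th and `j`-th coordinate projections of `R` coincide. -/
def kerEq {ι : Type} {A : ι → Type} (R : Set (∀ i, A i)) (i j : ι) : Prop :=
  ∀ x ∈ R, ∀ y ∈ R, (x i = y i ↔ x j = y j)
/-- A cube term: a `k`-ary idempotent term such that for each coordinate `i`
there is an identity `t(x_1,…,x_k) ≈ y` with each `x_j ∈ {x,y}` and `x_i = x`. -/
def IsCubeTerm {σ : Signature} {A : Type} (Alg : UAlgebra σ A) {k : ℕ}
    (t : UTerm σ k) : Prop :=
  (∀ a : A, Alg.eval t (fun _ => a) = a) ∧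
  ∀ i : Fin k, ∃ u : Fin k → Fin 2, u i = 0 ∧
    ∀ x y : A, Alg.eval t (fun j => pick x y (u j)) = y

/-- A term operation depends on its `j`-th argument. -/
def TermDependsOn {σ : Signature} {A : Type} (Alg : UAlgebra σ A) {k : ℕ}
    (t : UTerm σ k) (j : Fin k) : Prop :=
  ∃ (c : Fin k → A) (x y : A),
    Alg.eval t (Function.update c j x) ≠ Alg.eval t (Function.update c j y)

/-- `s` is a sink for `A`: every term operation depending on its `j`-th argument
returns `s` whenever `s` is placed in position `j`. -/
def IsSink {σ : Signature} {A : Type} (Alg : UAlgebra σ A) (s : A) : Prop :=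
  ∀ (k : ℕ) (t : UTerm σ k) (j : Fin k), TermDependsOn Alg t j →
    ∀ c : Fin k → A, Alg.eval t (Function.update c j s) = s

/-- `C(β, γ; δ)` : `β` centralizes `γ` modulo `δ`. -/
def Centralizes {σ : Signature} {A : Type} (Alg : UAlgebra σ A)
    (β γ δ : A → A → Prop) : Prop :=
  ∀ (ℓ m : ℕ) (t : UTerm σ (ℓ + m)) (a b : Fin ℓ → A) (u v : Fin m → A),
    (∀ i, β (a i) (b i)) → (∀ i, γ (u i) (v i)) →
    (δ (Alg.eval t (Fin.append a u)) (Alg.eval t (Fin.append a v)) ↔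
      δ (Alg.eval t (Fin.append b u)) (Alg.eval t (Fin.append b v)))

/-- The join `θ₁ ∨ θ₂` in the congruence lattice of `Alg`: the least congruence
containing `θ₁` and `θ₂`. -/
def conJoin {σ : Signature} {A : Type} (Alg : UAlgebra σ A)
    (θ₁ θ₂ : A → A → Prop) : A → A → Prop :=
  fun x y => ∀ θ : A → A → Prop, Alg.IsCong θ →
    (∀ a b, θ₁ a b → θ a b) → (∀ a b, θ₂ a b → θ a b) → θ x y

/-- The setoid determined by a congruence. -/
def congSetoid {σ : Signature} {A : Type} {Alg : UAlgebra σ A}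
    {δ : A → A → Prop} (h : Alg.IsCong δ) : Setoid A :=
  ⟨δ, ⟨h.1, fun hab => h.2.1 _ _ hab, fun hab hbc => h.2.2.1 _ _ _ hab hbc⟩⟩

/-- The quotient algebra `A/δ` (of a congruence-induced setoid). -/
noncomputable def quotAlgebra {σ : Signature} {A : Type} (Alg : UAlgebra σ A) (s : Setoid A) :
    UAlgebra σ (Quotient s) :=
  ⟨fun f x => Quotient.mk s (Alg.interp f (fun j => (x j).out))⟩

/-- The image `β/δ` of a congruence `β` on the quotient `A/δ`. -/
def quotCong {A : Type} (s : Setoid A) (β : A → A → Prop) :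
    Quotient s → Quotient s → Prop :=
  fun x y => ∃ a b : A, Quotient.mk s a = x ∧ Quotient.mk s b = y ∧ β a b

/-- Row-major pairing of indices: `(i, j) ↦ i * m + j`. -/
def pairIdx {l m : ℕ} (i : Fin l) (j : Fin m) : Fin (l * m) :=
  ⟨i.val * m + j.val, by
    have h1 : i.val * m + j.val < i.val * m + m := Nat.add_lt_add_left j.isLt _
    have h2 : i.val * m + m = (i.val + 1) * m := (Nat.succ_mul i.val m).symm
    have h3 : (i.val + 1) * m ≤ l * m :=
      Nat.mul_le_mul_right m (Nat.succ_le_of_lt i.isLt)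
    omega⟩

/-- Simultaneous substitution into a term. -/
def UTerm.bind {σ : Signature} {n k : ℕ} : UTerm σ n → (Fin n → UTerm σ k) → UTerm σ k
  | .var i, s => s i
  | .app f ts, s => .app f (fun j => (ts j).bind s)

/-- The star composition `f ⋆ g` of terms: the `ℓm`-ary term
`(f ⋆ g)(a₁₁,…,a_{ℓm}) = f(g(a₁₁,…,a₁ₘ), …, g(a_{ℓ1},…,a_{ℓm}))`. -/
def starTerm {σ : Signature} {l m : ℕ} (f : UTerm σ l) (g : UTerm σ m) :
    UTerm σ (l * m) :=
  f.bind (fun i => g.bind (fun j => .var (pairIdx i j)))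

/-- Star composition on arity-indexed terms. -/
def sigStar {σ : Signature} (p q : Σ k, UTerm σ k) : Σ k, UTerm σ k :=
  ⟨p.1 * q.1, starTerm p.2 q.2⟩

/-- The left-associated iterated star `p ⋆ q₀ ⋆ q₁ ⋆ ⋯`. -/
def iterStar {σ : Signature} (p : Σ k, UTerm σ k) :
    List (Σ k, UTerm σ k) → Σ k, UTerm σ k
  | [] => p
  | q :: rest => iterStar (sigStar p q) rest

/-- `B` is an absorbing subuniverse of the subalgebra with universe `R`. -/
def AbsorbingIn {σ : Signature} {A : Type} (Alg : UAlgebra σ A) (R B : Set A) : Prop :=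
  B.Nonempty ∧ B ⊆ R ∧ Alg.IsSubuniv B ∧
  ∃ (k : ℕ) (t : UTerm σ k), ∀ (j : Fin k) (x : Fin k → A),
    (∀ i, i ≠ j → x i ∈ B) → x j ∈ R → Alg.eval t x ∈ B


section Aux

variable {σ : Signature} {A : Type}

/-- Substitution lemma for `eval`. -/
lemma eval_bind (Alg : UAlgebra σ A) {n k : ℕ} (t : UTerm σ n)
    (s : Fin n → UTerm σ k) (env : Fin k → A) :
    Alg.eval (t.bind s) env = Alg.eval t (fun i => Alg.eval (s i) env) := by
  induction t with
  | var i => rfl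
  | app f ts ih =>
    simp only [UTerm.bind, UAlgebra.eval]
    congr 1
    funext j
    exact ih j

/-- Subuniverses are closed under all term operations. -/
lemma eval_mem (Alg : UAlgebra σ A) {Bs : Set A} (hBs : Alg.IsSubuniv Bs)
    {k : ℕ} (t : UTerm σ k) (env : Fin k → A) (h : ∀ j, env j ∈ Bs) :
    Alg.eval t env ∈ Bs := by
  induction t with
  | var i => exact h i
  | app f ts ih => exact hBs f _ (fun j => ih j)

/-- Evaluation in a product algebra is coordinatewise. -/
lemma eval_proj {ι : Type} {As : ι → Type} (Alg : ∀ i, UAlgebra σ (As i))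
    {k : ℕ} (t : UTerm σ k) (x : Fin k → ∀ i, As i) (i : ι) :
    (prodAlgebra Alg).eval t x i = (Alg i).eval t (fun j => x j i) := by
  induction t with
  | var j => rfl
  | app f ts ih =>
    simp only [UAlgebra.eval, prodAlgebra]
    congr 1
    funext j
    exact ih j

/-- The absorption condition alone. -/
def AbsorbsAt (Alg : UAlgebra σ A) (Bs : Set A) {k : ℕ} (t : UTerm σ k) : Prop :=
  ∀ (j : Fin k) (x : Fin k → A), (∀ i, i ≠ j → x i ∈ Bs) → Alg.eval t x ∈ Bs

lemma pairIdx_val {l m : ℕ} (i : Fin l) (j : Fin m) :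
    (pairIdx i j).val = i.val * m + j.val := rfl

lemma eval_starTerm (Alg : UAlgebra σ A) {l m : ℕ} (f : UTerm σ l)
    (g : UTerm σ m) (x : Fin (l * m) → A) :
    Alg.eval (starTerm f g) x =
      Alg.eval f (fun i => Alg.eval g (fun j => x (pairIdx i j))) := by
  unfold starTerm
  rw [eval_bind]
  congr 1
  funext i
  rw [eval_bind]
  rfl

lemma pairIdx_div {l m : ℕ} (i : Fin l) (j : Fin m) :
    (pairIdx i j).val / m = i.val := by
  have hm : 0 < m := j.pos
  rw [pairIdx_val, Nat.mul_comm, Nat.mul_add_div hm, Nat.div_eq_of_lt j.isLt,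
    Nat.add_zero]

lemma pairIdx_mod {l m : ℕ} (i : Fin l) (j : Fin m) :
    (pairIdx i j).val % m = j.val := by
  rw [pairIdx_val, Nat.mul_comm, Nat.mul_add_mod, Nat.mod_eq_of_lt j.isLt]

/-- If `t` absorbs `Bs`, so does `t ⋆ s`. -/
lemma starTerm_absorbs_left (Alg : UAlgebra σ A) {Bs : Set A}
    (hsub : Alg.IsSubuniv Bs) {l m : ℕ} {t : UTerm σ l} (s : UTerm σ m)
    (ht : AbsorbsAt Alg Bs t) : AbsorbsAt Alg Bs (starTerm t s) := by
  intro j x hx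
  rw [eval_starTerm]
  have hlm : 0 < l * m := j.pos
  have hm : 0 < m := by
    rcases Nat.eq_zero_or_pos m with h | h
    · subst h; simp at hlm
    · exact h
  have hl : 0 < l := by
    rcases Nat.eq_zero_or_pos l with h | h
    · subst h; simp at hlm
    · exact h
  set i0 : Fin l := ⟨j.val / m, by
    rw [Nat.div_lt_iff_lt_mul hm]; exact j.isLt⟩ with hi0
  apply ht i0
  intro i hi
  apply eval_mem Alg hsub
  intro j'
  apply hx
  intro hEq
  apply hi
  apply Fin.ext
  show i.val = j.val / m
  rw [← hEq, pairIdx_div]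

/-- If `s` absorbs `Bs`, so does `t ⋆ s`. -/
lemma starTerm_absorbs_right (Alg : UAlgebra σ A) {Bs : Set A}
    (hsub : Alg.IsSubuniv Bs) {l m : ℕ} (t : UTerm σ l) {s : UTerm σ m}
    (hs : AbsorbsAt Alg Bs s) : AbsorbsAt Alg Bs (starTerm t s) := by
  intro j x hx
  rw [eval_starTerm]
  have hlm : 0 < l * m := j.pos
  have hm : 0 < m := by
    rcases Nat.eq_zero_or_pos m with h | h
    · subst h; simp at hlm
    · exact h
  set j0 : Fin m := ⟨j.val % m, Nat.mod_lt _ hm⟩ with hj0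
  apply eval_mem Alg hsub
  intro i
  apply hs j0
  intro j' hj'
  apply hx
  intro hEq
  apply hj'
  apply Fin.ext
  show j'.val = j.val % m
  rw [← hEq, pairIdx_mod]

/-- Iterated star absorbs `Bs` as soon as one factor does. -/
lemma iterStar_absorbs (Alg : UAlgebra σ A) {Bs : Set A}
    (hsub : Alg.IsSubuniv Bs) :
    ∀ (L : List (Σ k, UTerm σ k)) (p : Σ k, UTerm σ k),
      (AbsorbsAt Alg Bs p.2 ∨ ∃ q ∈ L, AbsorbsAt Alg Bs q.2) →
      AbsorbsAt Alg Bs (iterStar p L).2 := by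
  intro L
  induction L with
  | nil =>
    intro p hp
    rcases hp with hp | ⟨q, hq, _⟩
    · exact hp
    · simp at hq
  | cons q rest ih =>
    intro p hp
    show AbsorbsAt Alg Bs (iterStar (sigStar p q) rest).2
    apply ih
    rcases hp with hp | ⟨q', hq', habs⟩
    · exact Or.inl (starTerm_absorbs_left Alg hsub q.2 hp)
    · rcases List.mem_cons.mp hq' with rfl | hmem
      · exact Or.inl (starTerm_absorbs_right Alg hsub p.2 habs)
      · exact Or.inr ⟨q', hmem, habs⟩

end Aux

/-- If `R ≤_sd ∏ Aᵢ`, `Bᵢ ◁◁ Aᵢ`, and `R' = R ∩ ∏ Bᵢ ≠ ∅`, then `R'` is a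
subdirect product of `∏ Bᵢ`: each coordinate projection of `R'` equals `Bᵢ`. -/
theorem mass_intersection_subdirect
    {σ : Signature} {n : ℕ} {A : Fin n → Type} [∀ i, Finite (A i)]
    (Alg : ∀ i, UAlgebra σ (A i)) (hidem : ∀ i, (Alg i).Idempotent)
    (B : ∀ i, Set (A i)) (hB : ∀ i, (Alg i).MinAbsorbing (B i))
    (R : Set (∀ i, A i)) (hR : IsSubdirect Alg R)
    (hne : (R ∩ {x | ∀ i, x i ∈ B i}).Nonempty) :
    ∀ i, (fun x : ∀ j, A j => x i) '' (R ∩ {x | ∀ j, x j ∈ B j}) = B i := by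
  classical
  intro i
  -- choose absorbing terms for each coordinate
  choose k t ht using fun m => (hB m).1
  have hBsub : ∀ m, (Alg m).IsSubuniv (B m) := fun m => (ht m).2.1
  have hBabs : ∀ m, AbsorbsAt (Alg m) (B m) (t m) := fun m => (ht m).2.2
  -- the big star term
  set L : List (Σ kk, UTerm σ kk) := List.ofFn (fun m : Fin n => (⟨k m, t m⟩ : Σ kk, UTerm σ kk)) with hL
  set P : Σ kk, UTerm σ kk := iterStar ⟨1, UTerm.var 0⟩ L with hP
  have hPabs : ∀ m : Fin n, AbsorbsAt (Alg m) (B m) P.2 := by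
    intro m
    apply iterStar_absorbs (Alg m) (hBsub m)
    exact Or.inr ⟨⟨k m, t m⟩, by rw [hL, List.mem_ofFn]; exact ⟨m, rfl⟩, hBabs m⟩
  set C : Set (A i) := (fun x : ∀ j, A j => x i) '' (R ∩ {x | ∀ j, x j ∈ B j}) with hC
  have hCsubB : C ⊆ B i := by
    rintro a ⟨x, ⟨-, hx2⟩, rfl⟩
    exact hx2 i
  -- C is a subuniverse
  have hCsub : (Alg i).IsSubuniv C := by
    intro f x hx
    choose r hr1 hr2 using fun j => hx j
    refine ⟨(prodAlgebra Alg).interp f r, ⟨hR.2.1 f r (fun j => (hr1 j).1), ?_⟩, ?_⟩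
    · intro m
      exact hBsub m f (fun j => r j m) (fun j => (hr1 j).2 m)
    · show (Alg i).interp f (fun j => r j i) = _
      congr 1
      funext j
      exact hr2 j
  -- C absorbs with P.2
  have hCabs : AbsorbsAt (Alg i) C P.2 := by
    intro j x hx
    have hlift : ∀ s : Fin P.1, ∃ r : ∀ m, A m,
        r ∈ R ∧ r i = x s ∧ (s ≠ j → ∀ m, r m ∈ B m) := by
      intro s
      by_cases hs : s = j
      · obtain ⟨r, hr, hri⟩ := hR.2.2 i (x s)
        exact ⟨r, hr, hri, fun h => absurd hs h⟩
      · obtain ⟨r, ⟨hr1, hr2⟩, hri⟩ := hx s hs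
        exact ⟨r, hr1, hri, fun _ => hr2⟩
    choose r hr1 hr2 hr3 using hlift
    refine ⟨(prodAlgebra Alg).eval P.2 r, ⟨eval_mem _ hR.2.1 _ _ hr1, ?_⟩, ?_⟩
    · intro m
      rw [eval_proj]
      exact hPabs m j (fun s => r s m) (fun s hs => hr3 s hs m)
    · show (prodAlgebra Alg).eval P.2 r i = _
      rw [eval_proj]
      congr 1
      funext s
      exact hr2 s
  have hCne : C.Nonempty := by
    obtain ⟨x, hx⟩ := hne
    exact ⟨x i, x, hx, rfl⟩
  have : C = B i := (hB i).2 C ⟨P.1, P.2, hCne, hCsub, hCabs⟩ hCsubB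
  exact this
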